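/- Let f be a monic polynomial of degree n ≥ 2 with complex coefficients with distinct roots λ_1,…,λ_k of multiplicities r_1,…,r_k, let z_{n-1} be the root of f^{(n-1)} and z_{n-2} a root of f^{(n-2)}. Then (z_{n-1} − z_{n-2})^2 = (1/(n^2(n−1))) · Σ_{1 ≤ j < s ≤ k} r_j r_s (λ_j − λ_s)^2. -/

import Mathlib

open Polynomial

lemma quad_aux (t : Multiset ℂ) :
    ((t.map fun a => (X : ℂ[X]) - C a).prod * X ^ 2).natDegree ≤ Multiset.card t + 2 ∧
    ((t.map fun a => (X : ℂ[X]) - C a).prod * X ^ 2).coeff (Multiset.card t + 2) = 1 ∧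
    ((t.map fun a => (X : ℂ[X]) - C a).prod * X ^ 2).coeff (Multiset.card t + 1) = - t.sum ∧
    ((t.map fun a => (X : ℂ[X]) - C a).prod * X ^ 2).coeff (Multiset.card t) * 2
      = t.sum ^ 2 - (t.map fun a => a ^ 2).sum := by
  induction t using Multiset.induction with
  | empty => simp [coeff_X_pow]
  | cons a t ih =>
    obtain ⟨h0, h1, h2, h3⟩ := ih
    set q := (t.map fun a => (X : ℂ[X]) - C a).prod * X ^ 2 with hq
    have hcons : (((a ::ₘ t).map fun a => (X : ℂ[X]) - C a).prod * X ^ 2) = (X - C a) * q := by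
      rw [hq, Multiset.map_cons, Multiset.prod_cons]; ring
    have key : ∀ m : ℕ, ((X - C a) * q).coeff (m + 1) = q.coeff m - a * q.coeff (m + 1) := by
      intro m
      rw [sub_mul, coeff_sub, coeff_X_mul, coeff_C_mul]
    have htop : q.coeff (Multiset.card t + 3) = 0 :=
      coeff_eq_zero_of_natDegree_lt (lt_of_le_of_lt h0 (by omega))
    have hdeg : ((X - C a) * q).natDegree ≤ Multiset.card t + 3 := by
      refine (natDegree_mul_le).trans ?_
      have : (X - C a : ℂ[X]).natDegree = 1 := natDegree_X_sub_C a
      omega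
    rw [hcons]
    simp only [Multiset.card_cons, Multiset.map_cons, Multiset.sum_cons]
    refine ⟨by simpa using hdeg, ?_, ?_, ?_⟩
    · have := key (Multiset.card t + 2)
      rw [show Multiset.card t + 1 + 2 = Multiset.card t + 2 + 1 by omega, this, h1,
        show Multiset.card t + 2 + 1 = Multiset.card t + 3 by omega, htop]
      ring
    · have := key (Multiset.card t + 1)
      rw [show Multiset.card t + 1 + 1 = Multiset.card t + 1 + 1 by omega, this, h2, h1]
      ring
    · have := key (Multiset.card t)
      rw [this]
      linear_combination h3 - 2 * a * h2

theorem stmt_3 (n k : ℕ) (hn : 2 ≤ n) (l : Fin k → ℂ) (hl : Function.Injective l)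
    (r : Fin k → ℕ) (hr : ∀ j, 1 ≤ r j) (hsum : ∑ j, r j = n)
    (f : ℂ[X]) (hf : f = ∏ j, (X - C (l j)) ^ r j)
    (zn1 : ℂ) (hzn1 : (derivative^[n - 1] f).eval zn1 = 0)
    (zn2 : ℂ) (hzn2 : (derivative^[n - 2] f).eval zn2 = 0) :
    (zn1 - zn2) ^ 2 =
      (1 / ((n : ℂ) ^ 2 * ((n : ℂ) - 1))) *
        ∑ p ∈ Finset.univ.filter (fun p : Fin k × Fin k => p.1 < p.2),
          (r p.1 : ℂ) * (r p.2 : ℂ) * (l p.1 - l p.2) ^ 2 := by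
  obtain ⟨m, rfl⟩ : ∃ m, n = m + 2 := ⟨n - 2, by omega⟩
  set e1 : ℂ := ∑ j, (r j : ℂ) * l j with he1
  set P : ℂ := ∑ j, (r j : ℂ) * l j ^ 2 with hP
  set S : ℂ := ∑ p ∈ Finset.univ.filter (fun p : Fin k × Fin k => p.1 < p.2),
      (r p.1 : ℂ) * (r p.2 : ℂ) * (l p.1 - l p.2) ^ 2 with hSdef
  -- multiset facts
  set t : Multiset ℂ := ∑ j, Multiset.replicate (r j) (l j) with ht
  have hmap : ∀ {β : Type} [AddCommMonoid β] (g : ℂ → β)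
      (s : Finset (Fin k)) (h : Fin k → Multiset ℂ),
      True := fun _ _ _ => trivial
  have hmapP : ∀ (s : Finset (Fin k)) (h : Fin k → Multiset ℂ),
      ((∑ j ∈ s, h j).map fun a => (X : ℂ[X]) - C a) = ∑ j ∈ s, ((h j).map fun a => (X : ℂ[X]) - C a) := by
    intro s h
    induction s using Finset.cons_induction with
    | empty => simp
    | cons a s ha ih => simp [Finset.sum_insert ha, ih]
  have hmapC : ∀ (s : Finset (Fin k)) (h : Fin k → Multiset ℂ),
      ((∑ j ∈ s, h j).map fun a => a ^ 2) = ∑ j ∈ s, ((h j).map fun a => a ^ 2) := by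
    intro s h
    induction s using Finset.cons_induction with
    | empty => simp
    | cons a s ha ih => simp [Finset.sum_insert ha, ih]
  have hcardS : ∀ (s : Finset (Fin k)) (h : Fin k → Multiset ℂ),
      Multiset.card (∑ j ∈ s, h j) = ∑ j ∈ s, Multiset.card (h j) := by
    intro s h
    induction s using Finset.cons_induction with
    | empty => simp
    | cons a s ha ih => simp [Finset.sum_insert ha, ih]
  have hmsum : ∀ (s : Finset (Fin k)) (h : Fin k → Multiset ℂ),
      (∑ j ∈ s, h j).sum = ∑ j ∈ s, (h j).sum := by
    intro s h
    induction s using Finset.cons_induction with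
    | empty => simp
    | cons a s ha ih => simp [Finset.sum_insert ha, ih]
  have hprodsum : ∀ (s : Finset (Fin k)) (g : Fin k → Multiset ℂ[X]),
      (∑ j ∈ s, g j).prod = ∏ j ∈ s, (g j).prod := by
    intro s g
    induction s using Finset.cons_induction with
    | empty => simp
    | cons a s ha ih =>
      simp [Finset.sum_insert ha, Finset.prod_insert ha, Multiset.prod_add, ih]
  have hprod : (t.map fun a => (X : ℂ[X]) - C a).prod = f := by
    rw [hf, ht, hmapP, hprodsum]
    simp [Multiset.map_replicate, Multiset.prod_replicate]
  have hcard : Multiset.card t = m + 2 := by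
    rw [ht, hcardS]
    simpa using hsum
  have hs1 : t.sum = e1 := by
    rw [ht, hmsum, he1]
    simp [Multiset.sum_replicate, nsmul_eq_mul]
  have hs2 : (t.map fun a => a ^ 2).sum = P := by
    rw [ht, hmapC, hmsum, hP]
    simp [Multiset.map_replicate, Multiset.sum_replicate, nsmul_eq_mul]
  -- coefficients of f
  obtain ⟨_, q1, q2, q3⟩ := quad_aux t
  simp only [hprod, hcard, hs1, hs2] at q1 q2 q3
  have c2 : f.coeff (m + 2) = 1 := by
    rw [show m + 2 + 2 = (m + 2) + 2 from rfl, coeff_mul_X_pow] at q1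
    exact q1
  have c1 : f.coeff (m + 1) = -e1 := by
    rw [show m + 2 + 1 = (m + 1) + 2 by omega, coeff_mul_X_pow] at q2
    exact q2
  have c0 : f.coeff m * 2 = e1 ^ 2 - P := by
    rw [show m + 2 = m + 2 from rfl, coeff_mul_X_pow] at q3
    exact q3
  -- degree of f
  have hfdeg : f.natDegree ≤ m + 2 := by
    rw [hf]
    refine (natDegree_prod_le _ _).trans ?_
    rw [← hsum]
    refine Finset.sum_le_sum fun j _ => ?_
    rw [natDegree_pow, natDegree_X_sub_C, mul_one]
  -- evaluate the (m+1)-st derivative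
  have hd1 : (derivative^[m + 1] f).natDegree < 2 := by
    have h := natDegree_iterate_derivative f (m + 1)
    omega
  have hd2 : (derivative^[m] f).natDegree < 3 := by
    have h := natDegree_iterate_derivative f m
    omega
  rw [show m + 2 - 1 = m + 1 from rfl, eval_eq_sum_range' hd1] at hzn1
  rw [show m + 2 - 2 = m from rfl, eval_eq_sum_range' hd2] at hzn2
  simp only [Finset.sum_range_succ, Finset.sum_range_zero, zero_add, pow_zero, pow_one,
    mul_one, coeff_iterate_derivative, nsmul_eq_mul] at hzn1 hzn2
  rw [show (1 + (m + 1)) = m + 2 by omega] at hzn1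
  rw [show (1 + m) = m + 1 by omega, show (2 + m) = m + 2 by omega] at hzn2
  rw [c1, c2] at hzn1
  rw [c1, c2] at hzn2
  -- descFactorial identities
  set A : ℂ := (m.descFactorial m : ℂ) with hA
  have hAne : A ≠ 0 := by
    rw [hA, Nat.descFactorial_self]
    exact_mod_cast (Nat.factorial_pos m).ne'
  have dI1 : ((m + 1).descFactorial (m + 1) : ℂ) = ((m : ℂ) + 1) * A := by
    rw [Nat.succ_descFactorial_succ]
    push_cast; ring
  have dI3 : ((m + 1).descFactorial m : ℂ) = ((m : ℂ) + 1) * A := by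
    have h := Nat.descFactorial_succ (m + 1) m
    rw [show m + 1 - m = 1 by omega, one_mul] at h
    rw [← h, dI1]
  have dI2 : ((m + 2).descFactorial (m + 1) : ℂ) = ((m : ℂ) + 2) * (((m : ℂ) + 1) * A) := by
    rw [show m + 2 = (m + 1) + 1 from rfl, show m + 1 = m + 1 from rfl,
      Nat.succ_descFactorial_succ]
    push_cast
    rw [dI3]
    push_cast; ring
  have dI4 : 2 * ((m + 2).descFactorial m : ℂ) = ((m : ℂ) + 2) * ((m : ℂ) + 1) * A := by
    have h := Nat.descFactorial_succ (m + 2) m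
    rw [show m + 2 - m = 2 by omega] at h
    have : ((m + 2).descFactorial (m + 1) : ℂ) = 2 * ((m + 2).descFactorial m : ℂ) := by
      exact_mod_cast congrArg (Nat.cast : ℕ → ℂ) h
    rw [← this, dI2]; ring
  rw [dI1, dI2] at hzn1
  rw [dI3] at hzn2
  -- derive key equations
  have hm1 : ((m : ℂ) + 1) ≠ 0 := by
    have : (0:ℝ) < (m:ℝ) + 1 := by positivity
    intro h
    exact_mod_cast this.ne' (by exact_mod_cast congrArg Complex.re h)
  have hm2 : ((m : ℂ) + 2) ≠ 0 := by
    intro h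
    have : ((m : ℂ) + 2).re = 0 := by rw [h]; simp
    simp [Complex.add_re] at this
    nlinarith [this, Nat.cast_nonneg (α := ℝ) m]
  have k1 : ((m : ℂ) + 2) * zn1 - e1 = 0 := by
    have hfac : (((m : ℂ) + 1) * A) * (((m : ℂ) + 2) * zn1 - e1) = 0 := by
      linear_combination hzn1
    rcases mul_eq_zero.mp hfac with h | h
    · exact absurd h (mul_ne_zero hm1 hAne)
    · exact h
  have k2 : ((m : ℂ) + 2) * (((m : ℂ) + 1)) * zn2 ^ 2
      - 2 * ((m : ℂ) + 1) * e1 * zn2 + (e1 ^ 2 - P) = 0 := by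
    have hfac : A * (((m : ℂ) + 2) * (((m : ℂ) + 1)) * zn2 ^ 2
        - 2 * ((m : ℂ) + 1) * e1 * zn2 + (e1 ^ 2 - P)) = 0 := by
      linear_combination 2 * hzn2 - A * c0 - zn2 ^ 2 * dI4
    rcases mul_eq_zero.mp hfac with h | h
    · exact absurd h hAne
    · exact h
  -- sum identity
  have hS2 : 2 * S = 2 * (((m : ℂ) + 2) * P - e1 ^ 2) := by
    have hN : (∑ j, (r j : ℂ)) = (m : ℂ) + 2 := by
      rw [← Nat.cast_sum, hsum]; push_cast; ring
    set F : Fin k × Fin k → ℂ := fun p => (r p.1 : ℂ) * (r p.2 : ℂ) * (l p.1 - l p.2) ^ 2 with hF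
    have hT : ∑ p : Fin k × Fin k, F p
        = 2 * (((m : ℂ) + 2) * P - e1 ^ 2) := by
      rw [Fintype.sum_prod_type]
      have hexp : ∀ j s : Fin k, F (j, s) = ((r j : ℂ) * l j ^ 2) * (r s : ℂ)
          + (r j : ℂ) * ((r s : ℂ) * l s ^ 2) - 2 * (((r j : ℂ) * l j) * ((r s : ℂ) * l s)) := by
        intro j s; simp only [hF]; ring
      simp only [hexp, Finset.sum_add_distrib, Finset.sum_sub_distrib, ← Finset.mul_sum,
        ← Finset.sum_mul, hN, ← he1, ← hP]
      ring
    have hswap : ∑ p ∈ Finset.univ.filter (fun p : Fin k × Fin k => p.1 < p.2), F p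
        = ∑ p ∈ Finset.univ.filter (fun p : Fin k × Fin k => p.2 < p.1), F p := by
      refine Finset.sum_nbij' (fun p => Prod.swap p) (fun p => Prod.swap p) ?_ ?_ ?_ ?_ ?_
      · intro p hp; simp only [Finset.mem_filter, Finset.mem_univ, true_and] at *; exact hp
      · intro p hp; simp only [Finset.mem_filter, Finset.mem_univ, true_and] at *; exact hp
      · intro p _; simp
      · intro p _; simp
      · intro p _; simp only [hF, Prod.fst_swap, Prod.snd_swap]; ring
    have hsplit : ∑ p : Fin k × Fin k, F p
        = ∑ p ∈ Finset.univ.filter (fun p : Fin k × Fin k => p.1 < p.2), F p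
          + ∑ p ∈ Finset.univ.filter (fun p : Fin k × Fin k => ¬ p.1 < p.2), F p :=
      (Finset.sum_filter_add_sum_filter_not _ _ _).symm
    have hrest : ∑ p ∈ Finset.univ.filter (fun p : Fin k × Fin k => ¬ p.1 < p.2), F p
        = ∑ p ∈ Finset.univ.filter (fun p : Fin k × Fin k => p.2 < p.1), F p := by
      rw [← Finset.sum_filter_add_sum_filter_not
        (Finset.univ.filter (fun p : Fin k × Fin k => ¬ p.1 < p.2))
        (fun p : Fin k × Fin k => p.2 < p.1) F]
      have h1 : (Finset.univ.filter (fun p : Fin k × Fin k => ¬ p.1 < p.2)).filter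
          (fun p => p.2 < p.1) = Finset.univ.filter (fun p : Fin k × Fin k => p.2 < p.1) := by
        ext p; simp only [Finset.mem_filter, Finset.mem_univ, true_and]
        constructor
        · rintro ⟨_, h⟩; exact h
        · intro h; exact ⟨fun h' => absurd h (lt_asymm h'), h⟩
      have h2 : ∑ p ∈ (Finset.univ.filter (fun p : Fin k × Fin k => ¬ p.1 < p.2)).filter
          (fun p => ¬ p.2 < p.1), F p = 0 := by
        refine Finset.sum_eq_zero fun p hp => ?_
        simp only [Finset.mem_filter, Finset.mem_univ, true_and] at hp
        have : p.1 = p.2 := le_antisymm (not_lt.mp hp.2) (not_lt.mp hp.1)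
        simp [hF, this]
      rw [h1, h2, add_zero]
    rw [hsplit, hrest, ← hswap] at hT
    rw [hSdef]
    linear_combination hT
  -- final algebra
  have main : (zn1 - zn2) ^ 2 * (((m : ℂ) + 2) ^ 2 * (((m : ℂ) + 2) - 1))
      = ((m : ℂ) + 2) * P - e1 ^ 2 := by
    linear_combination ((m : ℂ) + 2) * k2
      + ((((m : ℂ) + 2) - 1) * (((m : ℂ) + 2) * zn1 - e1 + 2 * e1 - 2 * ((m : ℂ) + 2) * zn2)
          + (zn1 - zn2) ^ 2 * (2 * ((m:ℂ)+2) - 1) * 0) * k1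
  have hcast : ((m + 2 : ℕ) : ℂ) = (m : ℂ) + 2 := by push_cast; ring
  rw [hcast]
  have hden : ((m : ℂ) + 2) ^ 2 * (((m : ℂ) + 2) - 1) ≠ 0 := by
    apply mul_ne_zero (pow_ne_zero _ hm2)
    have : ((m : ℂ) + 2) - 1 = (m : ℂ) + 1 := by ring
    rw [this]; exact hm1
  have hS : S = ((m : ℂ) + 2) * P - e1 ^ 2 := by linear_combination hS2 / 2
  rw [hS, ← main]
  field_simp
  have hm21 : ((m : ℂ) + 2) - 1 ≠ 0 := by
    rw [show ((m : ℂ) + 2) - 1 = (m : ℂ) + 1 by ring]; exact hm1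
  exact (mul_div_cancel_right₀ _ hm21).symm
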